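/- Let P, Q ∈ ℝ^{n×n} be symmetric positive definite and Ā, B̄ ∈ ℝ^{n×n} satisfy Āᵀ P Ā − P = −Q. Let κ > 1, θ ∈ (0,1), and set α = λ_min(Q)/κ and β = n·( (κ/(κ−1))·‖ĀᵀP B̄‖²/λ_min(Q) + ‖B̄ᵀ P B̄‖ ). Let ρ > β/(1−θ²) and ν = max{ 1 − α/λ_max(P), β/ρ + θ² }. Then ν < 1, and for all x, e ∈ ℝ^n and E ≥ 0 with |e|_∞ ≤ E, setting x₊ = Ā x + B̄ e and E₊ = θ E, one has x₊ᵀ P x₊ + ρ E₊² ≤ ν (xᵀ P x + ρ E²). -/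

import Mathlib

open scoped Matrix

/-- The Euclidean norm `|v| = (vᵀ v)^{1/2}` of a vector `v ∈ ℝ^n`. -/
noncomputable def eNorm {n : ℕ} (v : Fin n → ℝ) : ℝ :=
  Real.sqrt (∑ i, v i ^ 2)

/-- The induced Euclidean (spectral) norm `‖M‖ = sup {|Mv| : |v| = 1}`. -/
noncomputable def opENorm {m n : ℕ} (M : Matrix (Fin m) (Fin n) ℝ) : ℝ :=
  sSup {c : ℝ | ∃ v : Fin n → ℝ, eNorm v = 1 ∧ c = eNorm (M.mulVec v)}

/-- The smallest eigenvalue of a (symmetric) real matrix. -/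
noncomputable def eigMin {n : ℕ} (Q : Matrix (Fin n) (Fin n) ℝ) : ℝ :=
  sInf {t : ℝ | ∃ v : Fin n → ℝ, v ≠ 0 ∧ Q.mulVec v = t • v}

/-- The largest eigenvalue of a (symmetric) real matrix. -/
noncomputable def eigMax {n : ℕ} (P : Matrix (Fin n) (Fin n) ℝ) : ℝ :=
  sSup {t : ℝ | ∃ v : Fin n → ℝ, v ≠ 0 ∧ P.mulVec v = t • v}

lemma eNorm_nonneg {n : ℕ} (v : Fin n → ℝ) : 0 ≤ eNorm v := Real.sqrt_nonneg _

lemma eNorm_sq {n : ℕ} (v : Fin n → ℝ) : eNorm v ^ 2 = ∑ i, v i ^ 2 := by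
  rw [eNorm, Real.sq_sqrt]; positivity

lemma eNorm_smul {n : ℕ} (c : ℝ) (v : Fin n → ℝ) : eNorm (c • v) = |c| * eNorm v := by
  simp only [eNorm, Pi.smul_apply, smul_eq_mul, mul_pow, ← Finset.mul_sum]
  rw [Real.sqrt_mul (sq_nonneg c), Real.sqrt_sq_eq_abs]

lemma eNorm_eq_zero {n : ℕ} {v : Fin n → ℝ} (h : eNorm v = 0) : v = 0 := by
  have h2 : ∑ i, v i ^ 2 = 0 := by
    have := eNorm_sq v; rw [h] at this; simpa using this.symm
  funext i
  have := (Finset.sum_eq_zero_iff_of_nonneg (fun i _ => sq_nonneg (v i))).1 h2 i (Finset.mem_univ i)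
  exact pow_eq_zero_iff (two_ne_zero) |>.1 this

/-- Cauchy-Schwarz for dotProduct. -/
lemma dot_le_eNorm {n : ℕ} (v w : Fin n → ℝ) :
    dotProduct v w ≤ eNorm v * eNorm w := by
  have h := Finset.sum_mul_sq_le_sq_mul_sq Finset.univ v w
  have h2 : (dotProduct v w) ^ 2 ≤ (eNorm v * eNorm w) ^ 2 := by
    rw [mul_pow, eNorm_sq, eNorm_sq]; exact h
  nlinarith [mul_nonneg (eNorm_nonneg v) (eNorm_nonneg w)]

/-- Frobenius-type bound. -/
lemma eNorm_mulVec_le_frob {m n : ℕ} (M : Matrix (Fin m) (Fin n) ℝ) (v : Fin n → ℝ) :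
    eNorm (M.mulVec v) ≤ Real.sqrt (∑ i, ∑ j, M i j ^ 2) * eNorm v := by
  have key : ∑ i, (M.mulVec v) i ^ 2 ≤ (∑ i, ∑ j, M i j ^ 2) * (∑ j, v j ^ 2) := by
    rw [Finset.sum_mul]
    refine Finset.sum_le_sum fun i _ => ?_
    exact Finset.sum_mul_sq_le_sq_mul_sq Finset.univ (fun j => M i j) v
  rw [eNorm, eNorm, ← Real.sqrt_mul (by positivity)]
  exact Real.sqrt_le_sqrt key

lemma opENorm_bddAbove {m n : ℕ} (M : Matrix (Fin m) (Fin n) ℝ) :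
    BddAbove {c : ℝ | ∃ v : Fin n → ℝ, eNorm v = 1 ∧ c = eNorm (M.mulVec v)} := by
  refine ⟨Real.sqrt (∑ i, ∑ j, M i j ^ 2), fun c hc => ?_⟩
  obtain ⟨v, hv, rfl⟩ := hc
  simpa [hv] using eNorm_mulVec_le_frob M v

lemma eNorm_single_one {n : ℕ} (hn : 0 < n) :
    eNorm (Pi.single (⟨0, hn⟩ : Fin n) (1:ℝ)) = 1 := by
  have hsum : (∑ i : Fin n, ((Pi.single (⟨0, hn⟩ : Fin n) (1:ℝ) : Fin n → ℝ)) i ^ 2) = 1 := by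
    rw [Finset.sum_eq_single (⟨0, hn⟩ : Fin n)]
    · simp
    · intro b _ hb; simp [Pi.single_eq_of_ne hb]
    · simp
  rw [eNorm, hsum, Real.sqrt_one]

lemma opENorm_nonneg {m n : ℕ} (hn : 0 < n) (M : Matrix (Fin m) (Fin n) ℝ) :
    0 ≤ opENorm M := by
  have hmem : eNorm (M.mulVec (Pi.single (⟨0, hn⟩ : Fin n) 1)) ∈
      {c : ℝ | ∃ v : Fin n → ℝ, eNorm v = 1 ∧ c = eNorm (M.mulVec v)} :=
    ⟨_, eNorm_single_one hn, rfl⟩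
  exact le_trans (eNorm_nonneg _) (le_csSup (opENorm_bddAbove M) hmem)

lemma eNorm_mulVec_le {m n : ℕ} (hn : 0 < n) (M : Matrix (Fin m) (Fin n) ℝ) (v : Fin n → ℝ) :
    eNorm (M.mulVec v) ≤ opENorm M * eNorm v := by
  rcases eq_or_ne (eNorm v) 0 with h | h
  · rw [eNorm_eq_zero h]
    simp [Matrix.mulVec_zero, h, eNorm, Finset.sum_const_zero]
  · have hpos : 0 < eNorm v := lt_of_le_of_ne (eNorm_nonneg v) (Ne.symm h)
    set u := (eNorm v)⁻¹ • v with hu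
    have hu1 : eNorm u = 1 := by
      rw [hu, eNorm_smul, abs_of_pos (by positivity), inv_mul_cancel₀ h]
    have hmem : eNorm (M.mulVec u) ∈
        {c : ℝ | ∃ w : Fin n → ℝ, eNorm w = 1 ∧ c = eNorm (M.mulVec w)} := ⟨u, hu1, rfl⟩
    have hle : eNorm (M.mulVec u) ≤ opENorm M := le_csSup (opENorm_bddAbove M) hmem
    have hMu : eNorm (M.mulVec u) = (eNorm v)⁻¹ * eNorm (M.mulVec v) := by
      rw [hu, Matrix.mulVec_smul, eNorm_smul, abs_of_pos (by positivity)]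
    rw [hMu] at hle
    calc eNorm (M.mulVec v) = (eNorm v)⁻¹ * eNorm (M.mulVec v) * eNorm v := by
          field_simp
      _ ≤ opENorm M * eNorm v := by
          exact mul_le_mul_of_nonneg_right hle (le_of_lt hpos)

lemma inner_eq_dot {n : ℕ} (x y : EuclideanSpace ℝ (Fin n)) :
    (inner ℝ x y : ℝ) = dotProduct (x : Fin n → ℝ) (y : Fin n → ℝ) := by
  simp [PiLp.inner_apply, RCLike.inner_apply, dotProduct]
  exact Finset.sum_congr rfl fun _ _ => mul_comm _ _

lemma eig_set_eq {n : ℕ} {A : Matrix (Fin n) (Fin n) ℝ} (hA : A.IsHermitian) :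
    {t : ℝ | ∃ v : Fin n → ℝ, v ≠ 0 ∧ A.mulVec v = t • v} = Set.range hA.eigenvalues := by
  ext t
  simp only [Set.mem_setOf_eq, Set.mem_range]
  constructor
  · rintro ⟨v, hv, hAv⟩
    set b := hA.eigenvectorBasis with hb
    set u : EuclideanSpace ℝ (Fin n) := WithLp.toLp 2 v with hu
    have hu0 : u ≠ 0 := by intro h; apply hv; simpa [hu] using congrArg WithLp.ofLp h
    have hrepr : b.repr u ≠ 0 := by
      intro h
      exact hu0 (by simpa [h] using (b.repr.map_eq_zero_iff).1 h)
    obtain ⟨i, hi⟩ : ∃ i, b.repr u i ≠ 0 := by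
      by_contra hcon
      push_neg at hcon
      exact hrepr (by ext i; simpa using hcon i)
    refine ⟨i, ?_⟩
    have hrap : b.repr u i = dotProduct (⇑(b i) : Fin n → ℝ) v := by
      rw [b.repr_apply_apply, inner_eq_dot]
    have h1 : dotProduct (⇑(b i) : Fin n → ℝ) (A.mulVec v) =
        t * dotProduct (⇑(b i) : Fin n → ℝ) v := by
      rw [hAv, dotProduct_smul, smul_eq_mul]
    have h2 : dotProduct (⇑(b i) : Fin n → ℝ) (A.mulVec v) =
        hA.eigenvalues i * dotProduct (⇑(b i) : Fin n → ℝ) v := by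
      rw [Matrix.dotProduct_mulVec, ← Matrix.mulVec_transpose]
      have hAt : Aᵀ = A := by
        have := hA.eq
        rwa [Matrix.conjTranspose_eq_transpose_of_trivial] at this
      rw [hAt, hA.mulVec_eigenvectorBasis i, smul_dotProduct, smul_eq_mul]
    have := h1.symm.trans h2
    have hdot : dotProduct (⇑(b i) : Fin n → ℝ) v ≠ 0 := by rwa [← hrap]
    exact (mul_right_cancel₀ hdot this).symm
  · rintro ⟨i, rfl⟩
    refine ⟨⇑(hA.eigenvectorBasis i), ?_, hA.mulVec_eigenvectorBasis i⟩
    intro h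
    have := hA.eigenvectorBasis.orthonormal.ne_zero i
    exact this (by ext j; exact congrFun h j)

lemma rayleigh {n : ℕ} (hn : 0 < n) {A : Matrix (Fin n) (Fin n) ℝ} (hA : A.IsHermitian)
    (v : Fin n → ℝ) :
    eigMin A * (∑ i, v i ^ 2) ≤ dotProduct v (A.mulVec v) ∧
      dotProduct v (A.mulVec v) ≤ eigMax A * (∑ i, v i ^ 2) := by
  have hne : Nonempty (Fin n) := ⟨⟨0, hn⟩⟩
  set b := hA.eigenvectorBasis with hb
  set u : EuclideanSpace ℝ (Fin n) := WithLp.toLp 2 v with hu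
  set c : Fin n → ℝ := fun i => b.repr u i with hc
  have hrap : ∀ i, c i = dotProduct (⇑(b i) : Fin n → ℝ) v := by
    intro i
    show b.repr u i = _
    rw [b.repr_apply_apply, inner_eq_dot]
  have hsum : (∑ i, c i • (⇑(b i) : Fin n → ℝ)) = v := by
    have := congrArg WithLp.ofLp (b.sum_repr u); simpa [hc, hu] using this
  have hdotb : ∀ w : Fin n → ℝ, dotProduct v w
      = ∑ i, c i * dotProduct (⇑(b i) : Fin n → ℝ) w := by
    intro w
    conv_lhs => rw [← hsum]
    simp only [dotProduct, Finset.sum_apply, Pi.smul_apply, smul_eq_mul,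
      Finset.sum_mul, Finset.mul_sum]
    rw [Finset.sum_comm]
    exact Finset.sum_congr rfl fun i _ => Finset.sum_congr rfl fun j _ => by ring
  have hAbi : ∀ i, A.mulVec (⇑(b i) : Fin n → ℝ) = hA.eigenvalues i • (⇑(b i) : Fin n → ℝ) :=
    hA.mulVec_eigenvectorBasis
  have hdotAb : ∀ i, dotProduct (⇑(b i) : Fin n → ℝ) (A.mulVec v) =
      hA.eigenvalues i * c i := by
    intro i
    rw [Matrix.dotProduct_mulVec, ← Matrix.mulVec_transpose]
    have hAt : Aᵀ = A := by
      have := hA.eq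
      rwa [Matrix.conjTranspose_eq_transpose_of_trivial] at this
    rw [hAt, hAbi i, smul_dotProduct, smul_eq_mul, ← hrap i]
  have hquad : dotProduct v (A.mulVec v) = ∑ i, hA.eigenvalues i * c i ^ 2 := by
    rw [hdotb (A.mulVec v)]
    refine Finset.sum_congr rfl fun i _ => ?_
    rw [hdotAb i]; ring
  have hnorm : (∑ i, v i ^ 2) = ∑ i, c i ^ 2 := by
    have h1 : dotProduct v v = ∑ i, v i ^ 2 := by
      simp [dotProduct, pow_two]
    have h2 := hdotb v
    rw [h1] at h2
    rw [h2]
    refine Finset.sum_congr rfl fun i _ => ?_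
    have : dotProduct (⇑(b i) : Fin n → ℝ) v = c i := (hrap i).symm
    rw [this]; ring
  have hSmin : ∀ i, eigMin A ≤ hA.eigenvalues i := by
    intro i
    rw [eigMin, eig_set_eq hA]
    exact csInf_le (Set.finite_range _).bddBelow ⟨i, rfl⟩
  have hSmax : ∀ i, hA.eigenvalues i ≤ eigMax A := by
    intro i
    rw [eigMax, eig_set_eq hA]
    exact le_csSup (Set.finite_range _).bddAbove ⟨i, rfl⟩
  constructor
  · rw [hquad, hnorm, Finset.mul_sum]
    exact Finset.sum_le_sum fun i _ => mul_le_mul_of_nonneg_right (hSmin i) (sq_nonneg _)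
  · rw [hquad, hnorm, Finset.mul_sum]
    exact Finset.sum_le_sum fun i _ => mul_le_mul_of_nonneg_right (hSmax i) (sq_nonneg _)

lemma eigMin_mem {n : ℕ} (hn : 0 < n) {A : Matrix (Fin n) (Fin n) ℝ} (hA : A.IsHermitian) :
    ∃ i, hA.eigenvalues i = eigMin A := by
  have hne : Nonempty (Fin n) := ⟨⟨0, hn⟩⟩
  have : eigMin A ∈ Set.range hA.eigenvalues := by
    rw [eigMin, eig_set_eq hA]
    exact (Set.range_nonempty _).csInf_mem (Set.finite_range _)
  exact this

lemma eigMax_mem {n : ℕ} (hn : 0 < n) {A : Matrix (Fin n) (Fin n) ℝ} (hA : A.IsHermitian) :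
    ∃ i, hA.eigenvalues i = eigMax A := by
  have hne : Nonempty (Fin n) := ⟨⟨0, hn⟩⟩
  have : eigMax A ∈ Set.range hA.eigenvalues := by
    rw [eigMax, eig_set_eq hA]
    exact (Set.range_nonempty _).csSup_mem (Set.finite_range _)
  exact this

lemma eigMin_pos {n : ℕ} (hn : 0 < n) {A : Matrix (Fin n) (Fin n) ℝ} (hA : A.PosDef) :
    0 < eigMin A := by
  obtain ⟨i, hi⟩ := eigMin_mem hn hA.1
  rw [← hi]
  exact hA.eigenvalues_pos i

lemma eigMax_pos {n : ℕ} (hn : 0 < n) {A : Matrix (Fin n) (Fin n) ℝ} (hA : A.PosDef) :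
    0 < eigMax A := by
  obtain ⟨i, hi⟩ := eigMax_mem hn hA.1
  rw [← hi]
  exact hA.eigenvalues_pos i

lemma young_ineq (t a b : ℝ) (ht : 0 < t) : 2*(a*b) ≤ t*a^2 + b^2/t := by
  have h : 2*(a*b)*t ≤ (t*a^2 + b^2/t)*t := by
    field_simp
    nlinarith [sq_nonneg (t*a - b)]
  exact le_of_mul_le_mul_right h ht

lemma dot_mulVec_helper {n : ℕ} (A P B : Matrix (Fin n) (Fin n) ℝ) (x e : Fin n → ℝ) :
    dotProduct (A.mulVec x) (P.mulVec (B.mulVec e))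
      = dotProduct x ((Aᵀ * P * B).mulVec e) := by
  rw [← Matrix.mulVec_mulVec, ← Matrix.mulVec_mulVec, Matrix.dotProduct_mulVec x,
    Matrix.vecMul_transpose]


lemma young_ineq' (t a b : ℝ) (ht : 0 < t) : 2*(a*b) ≤ t*a^2 + b^2/t := by
  have h : 2*(a*b)*t ≤ (t*a^2 + b^2/t)*t := by
    field_simp
    nlinarith [sq_nonneg (t*a - b)]
  exact le_of_mul_le_mul_right h ht

lemma nu_lt_one (κ θ α β ρ ν lq lp : ℝ)
    (hκ : 1 < κ) (hθ0 : 0 < θ) (hθ1 : θ < 1)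
    (hlq : 0 < lq) (hlp : 0 < lp) (hβ0 : 0 ≤ β)
    (hα : α = lq / κ)
    (hρ : ρ > β / (1 - θ^2)) (hν : ν = max (1 - α/lp) (β/ρ + θ^2)) :
    ν < 1 ∧ 0 < ρ := by
  have hκ0 : (0:ℝ) < κ := by linarith
  have hθsq : (0:ℝ) < 1 - θ^2 := by nlinarith
  have hα0 : 0 < α := by rw [hα]; exact div_pos hlq hκ0
  have hρ0 : 0 < ρ := lt_of_le_of_lt (div_nonneg hβ0 hθsq.le) hρ
  have hβρ : β < ρ * (1 - θ^2) := by
    have := (div_lt_iff₀ hθsq).1 hρ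
    linarith
  refine ⟨?_, hρ0⟩
  rw [hν]
  apply max_lt
  · have : 0 < α / lp := div_pos hα0 hlp
    linarith
  · have : β / ρ < 1 - θ^2 := (div_lt_iff₀ hρ0).2 (by linarith)
    linarith

set_option maxHeartbeats 1000000 in
lemma glue (κ θ α β ρ ν lq lp m nN V W C D a s Vp E nr : ℝ)
    (hκ : 1 < κ) (hθ0 : 0 < θ) (hθ1 : θ < 1)
    (hlq : 0 < lq) (hlp : 0 < lp) (hm0 : 0 ≤ m) (hnN0 : 0 ≤ nN)
    (hα : α = lq / κ) (hβ : β = nr * (κ/(κ-1) * m^2 / lq + nN))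
    (hρ : ρ > β / (1 - θ^2)) (hν : ν = max (1 - α/lp) (β/ρ + θ^2))
    (hE : 0 ≤ E) (hnr : 0 ≤ nr)
    (ha0 : 0 ≤ a) (hs0 : 0 ≤ s)
    (hexp : Vp = V - W + 2*C + D)
    (hsE : s^2 ≤ nr * E^2)
    (hCle : C ≤ a * (m*s)) (hDle : D ≤ nN * s^2)
    (hQx : lq * a^2 ≤ W) (hPx : V ≤ lp * a^2) (hV0 : 0 ≤ V) :
    Vp + ρ*(θ*E)^2 ≤ ν * (V + ρ*E^2) := by
  have hκ0 : (0:ℝ) < κ := by linarith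
  have hκ1 : (0:ℝ) < κ - 1 := by linarith
  have hθsq : (0:ℝ) < 1 - θ^2 := by nlinarith
  have hα0 : 0 < α := by rw [hα]; exact div_pos hlq hκ0
  have hβ0 : 0 ≤ β := by
    rw [hβ]
    exact mul_nonneg hnr (add_nonneg
      (div_nonneg (mul_nonneg (div_pos hκ0 hκ1).le (sq_nonneg m)) hlq.le) hnN0)
  have hρ0 : 0 < ρ := (nu_lt_one κ θ α β ρ ν lq lp hκ hθ0 hθ1 hlq hlp hβ0 hα hρ hν).2
  set t := (κ-1)/κ * lq with ht
  have ht0 : 0 < t := mul_pos (div_pos hκ1 hκ0) hlq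
  have hyoung : 2*C ≤ (κ-1)/κ * W + κ/(κ-1) * m^2 / lq * s^2 := by
    have h1 : 2*C ≤ 2*(a*(m*s)) := by linarith
    have h2 : 2*(a*(m*s)) ≤ t*a^2 + (m*s)^2/t := young_ineq' t a (m*s) ht0
    have h3 : (m*s)^2/t = κ/(κ-1) * m^2 / lq * s^2 := by
      rw [ht]; field_simp
    have h4 : t*a^2 ≤ (κ-1)/κ * W := by
      calc t*a^2 = (κ-1)/κ * (lq * a^2) := by rw [ht]; ring
        _ ≤ (κ-1)/κ * W := mul_le_mul_of_nonneg_left hQx (div_pos hκ1 hκ0).le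
    linarith
  have hfracW : (κ-1)/κ * W = W - 1/κ * W := by field_simp
  have hmain : Vp ≤ V - 1/κ * W + β * E^2 := by
    rw [hexp]
    have hcoef : 0 ≤ κ/(κ-1) * m^2 / lq + nN :=
      add_nonneg (div_nonneg (mul_nonneg (div_pos hκ0 hκ1).le (sq_nonneg m)) hlq.le) hnN0
    have h5 : (κ/(κ-1) * m^2 / lq + nN) * s^2
        ≤ (κ/(κ-1) * m^2 / lq + nN) * (nr*E^2) :=
      mul_le_mul_of_nonneg_left hsE hcoef
    have h6 : (κ/(κ-1) * m^2 / lq + nN) * (nr*E^2) = β * E^2 := by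
      rw [hβ]; ring
    linarith [hyoung, hDle, h5, h6, hfracW]
  have hαa : α * a^2 ≤ 1/κ * W := by
    calc α * a^2 = 1/κ * (lq * a^2) := by rw [hα]; ring
      _ ≤ 1/κ * W := mul_le_mul_of_nonneg_left hQx (by positivity)
  have hαV : α / lp * V ≤ α * a^2 := by
    calc α / lp * V ≤ α / lp * (lp * a^2) :=
          mul_le_mul_of_nonneg_left hPx (div_pos hα0 hlp).le
      _ = α * a^2 := by field_simp
  have hstep : Vp ≤ (1 - α / lp) * V + β * E^2 := by nlinarith [hmain, hαa, hαV]
  have hν1' : 1 - α / lp ≤ ν := by rw [hν]; exact le_max_left _ _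
  have hν2' : β / ρ + θ^2 ≤ ν := by rw [hν]; exact le_max_right _ _
  have hE2 : (0:ℝ) ≤ E^2 := sq_nonneg E
  have hfin1 : (1 - α / lp) * V ≤ ν * V := mul_le_mul_of_nonneg_right hν1' hV0
  have hfin2 : β * E^2 + ρ * (θ*E)^2 ≤ ν * (ρ * E^2) := by
    have h7 : β * E^2 + ρ * (θ*E)^2 = ρ * ((β/ρ + θ^2) * E^2) := by
      field_simp
    rw [h7]
    calc ρ * ((β/ρ + θ^2) * E^2) ≤ ρ * (ν * E^2) := by
          apply mul_le_mul_of_nonneg_left _ hρ0.le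
          exact mul_le_mul_of_nonneg_right hν2' hE2
      _ = ν * (ρ * E^2) := by ring
  calc Vp + ρ * (θ * E) ^ 2 ≤ (1 - α / lp) * V + β * E^2 + ρ * (θ*E)^2 := by linarith
    _ ≤ ν * V + ν * (ρ * E^2) := by linarith
    _ = ν * (V + ρ * E^2) := by ring

/-- contraction of the Lyapunov function `V(x,E) = xᵀPx + ρE²`
over one quantization cycle without switching: `ν < 1` and
`V(x₊, θE) ≤ ν V(x, E)` whenever `|e|_∞ ≤ E` and `x₊ = Ā x + B̄ e`.
(The norm `‖·‖` on `Fin n → ℝ` is the sup norm `|·|_∞`.) -/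
theorem stmt_6 (n : ℕ) (hn : 0 < n) (P Q Ab Bb : Matrix (Fin n) (Fin n) ℝ)
    (hP : P.PosDef) (hQ : Q.PosDef) (hLyap : Abᵀ * P * Ab - P = -Q)
    (κ θ : ℝ) (hκ : 1 < κ) (hθ0 : 0 < θ) (hθ1 : θ < 1)
    (α β ρ ν : ℝ)
    (hα : α = eigMin Q / κ)
    (hβ : β = (n : ℝ) *
      (κ / (κ - 1) * opENorm (Abᵀ * P * Bb) ^ 2 / eigMin Q + opENorm (Bbᵀ * P * Bb)))
    (hρ : ρ > β / (1 - θ ^ 2))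
    (hν : ν = max (1 - α / eigMax P) (β / ρ + θ ^ 2)) :
    ν < 1 ∧
      ∀ (x e : Fin n → ℝ) (E : ℝ), 0 ≤ E → ‖e‖ ≤ E →
        dotProduct (Ab.mulVec x + Bb.mulVec e)
            (P.mulVec (Ab.mulVec x + Bb.mulVec e)) + ρ * (θ * E) ^ 2 ≤
          ν * (dotProduct x (P.mulVec x) + ρ * E ^ 2) := by
  have hκ0 : (0:ℝ) < κ := by linarith
  have hκ1 : (0:ℝ) < κ - 1 := by linarith
  have hlq : 0 < eigMin Q := eigMin_pos hn hQ
  have hlp : 0 < eigMax P := eigMax_pos hn hP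
  have hm0 : 0 ≤ opENorm (Abᵀ * P * Bb) := opENorm_nonneg hn _
  have hnN0 : 0 ≤ opENorm (Bbᵀ * P * Bb) := opENorm_nonneg hn _
  have hβ0 : 0 ≤ β := by
    rw [hβ]
    exact mul_nonneg (Nat.cast_nonneg n) (add_nonneg
      (div_nonneg (mul_nonneg (div_pos hκ0 hκ1).le (sq_nonneg _)) hlq.le) hnN0)
  refine ⟨(nu_lt_one κ θ α β ρ ν (eigMin Q) (eigMax P) hκ hθ0 hθ1 hlq hlp hβ0 hα hρ hν).1, ?_⟩
  intro x e E hE he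
  have hPt : Pᵀ = P := by
    have := hP.1.eq
    rwa [Matrix.conjTranspose_eq_transpose_of_trivial] at this
  have hAtPA : Abᵀ * P * Ab = P - Q := by
    have h := hLyap
    rw [sub_eq_iff_eq_add] at h
    rw [h]; abel
  have hexp : dotProduct (Ab.mulVec x + Bb.mulVec e)
      (P.mulVec (Ab.mulVec x + Bb.mulVec e))
      = dotProduct x (P.mulVec x) - dotProduct x (Q.mulVec x)
        + 2 * dotProduct x ((Abᵀ * P * Bb).mulVec e)
        + dotProduct e ((Bbᵀ * P * Bb).mulVec e) := by
    rw [Matrix.mulVec_add, dotProduct_add, add_dotProduct,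
      add_dotProduct]
    have h11 : dotProduct (Ab.mulVec x) (P.mulVec (Ab.mulVec x))
        = dotProduct x (P.mulVec x) - dotProduct x (Q.mulVec x) := by
      rw [dot_mulVec_helper, hAtPA, Matrix.sub_mulVec, dotProduct_sub]
    have h12 : dotProduct (Ab.mulVec x) (P.mulVec (Bb.mulVec e))
        = dotProduct x ((Abᵀ * P * Bb).mulVec e) := by
      rw [dot_mulVec_helper]
    have h21 : dotProduct (Bb.mulVec e) (P.mulVec (Ab.mulVec x))
        = dotProduct x ((Abᵀ * P * Bb).mulVec e) := by
      rw [dot_mulVec_helper]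
      have hMt : Bbᵀ * P * Ab = (Abᵀ * P * Bb)ᵀ := by
        rw [Matrix.transpose_mul, Matrix.transpose_mul, Matrix.transpose_transpose, hPt,
          Matrix.mul_assoc]
      rw [hMt, Matrix.dotProduct_mulVec, Matrix.vecMul_transpose,
        dotProduct_comm]
    have h22 : dotProduct (Bb.mulVec e) (P.mulVec (Bb.mulVec e))
        = dotProduct e ((Bbᵀ * P * Bb).mulVec e) := by
      rw [dot_mulVec_helper]
    rw [h11, h12, h21, h22]; ring
  have hsE : eNorm e ^ 2 ≤ (n:ℝ) * E^2 := by
    rw [eNorm_sq]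
    calc ∑ i, e i ^2 ≤ ∑ _i : Fin n, E^2 := by
          refine Finset.sum_le_sum fun i _ => ?_
          have h1 : |e i| ≤ E := le_trans (norm_le_pi_norm e i) he
          nlinarith [abs_nonneg (e i), sq_abs (e i)]
      _ = (n:ℝ) * E^2 := by simp [Finset.sum_const, mul_comm]
  have hCle : dotProduct x ((Abᵀ * P * Bb).mulVec e)
      ≤ eNorm x * (opENorm (Abᵀ * P * Bb) * eNorm e) :=
    le_trans (dot_le_eNorm _ _)
      (mul_le_mul_of_nonneg_left (eNorm_mulVec_le hn _ e) (eNorm_nonneg x))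
  have hDle : dotProduct e ((Bbᵀ * P * Bb).mulVec e)
      ≤ opENorm (Bbᵀ * P * Bb) * eNorm e ^ 2 := by
    calc dotProduct e ((Bbᵀ * P * Bb).mulVec e)
        ≤ eNorm e * eNorm ((Bbᵀ * P * Bb).mulVec e) := dot_le_eNorm _ _
      _ ≤ eNorm e * (opENorm (Bbᵀ * P * Bb) * eNorm e) :=
          mul_le_mul_of_nonneg_left (eNorm_mulVec_le hn _ e) (eNorm_nonneg e)
      _ = opENorm (Bbᵀ * P * Bb) * eNorm e ^ 2 := by ring
  have hQx : eigMin Q * eNorm x ^ 2 ≤ dotProduct x (Q.mulVec x) := by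
    rw [eNorm_sq]; exact (rayleigh hn hQ.1 x).1
  have hPx : dotProduct x (P.mulVec x) ≤ eigMax P * eNorm x ^ 2 := by
    rw [eNorm_sq]; exact (rayleigh hn hP.1 x).2
  have hV0 : 0 ≤ dotProduct x (P.mulVec x) := by
    have := hP.posSemidef.re_dotProduct_nonneg x
    simpa using this
  exact glue κ θ α β ρ ν (eigMin Q) (eigMax P) (opENorm (Abᵀ * P * Bb))
    (opENorm (Bbᵀ * P * Bb)) (dotProduct x (P.mulVec x))
    (dotProduct x (Q.mulVec x)) (dotProduct x ((Abᵀ * P * Bb).mulVec e))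
    (dotProduct e ((Bbᵀ * P * Bb).mulVec e)) (eNorm x) (eNorm e)
    (dotProduct (Ab.mulVec x + Bb.mulVec e) (P.mulVec (Ab.mulVec x + Bb.mulVec e)))
    E (n:ℝ) hκ hθ0 hθ1 hlq hlp hm0 hnN0 hα hβ hρ hν hE (Nat.cast_nonneg n)
    (eNorm_nonneg x) (eNorm_nonneg e) hexp hsE hCle hDle hQx hPx hV0
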